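/- Let u_l > u_r and ρ_l, ρ_r > 0, and suppose that for each ε in some interval (0, η) the pair (u*_ε, ρ*_ε) satisfies u_r < u*_ε < u_l, ρ*_ε > max(ρ_l, ρ_r), together with the two equations (u*_ε − u_l)²·(ρ*_ε + ρ_l)/2 = ε·(ρ*_ε − ρ_l)·(p(ρ*_ε) − p(ρ_l)) and (u*_ε − u_r)²·(ρ*_ε + ρ_r)/2 = ε·(ρ*_ε − ρ_r)·(p(ρ*_ε) − p(ρ_r)). Then, as ε → 0⁺, the quantity [ (u_r − u_l)/2 + ε·(p(ρ*_ε) − p(ρ_r))/(u*_ε − u_r) − ε·(p(ρ*_ε) − p(ρ_l))/(u*_ε − u_l) ]·ρ*_ε converges to (1/2)·(u_l − u_r)·(ρ_l + ρ_r). -/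

import Mathlib

open Real Filter Topology

set_option maxHeartbeats 1000000

/-- The pressure-like function `p(ρ) = ∫₀^ρ ξ·e^ξ dξ`. -/
noncomputable def p (ρ : ℝ) : ℝ := ∫ ξ in (0:ℝ)..ρ, ξ * Real.exp ξ

lemma p_eq (ρ : ℝ) : p ρ = (ρ - 1) * Real.exp ρ + 1 := by
  have h : ∀ x ∈ Set.uIcc (0:ℝ) ρ, HasDerivAt (fun x => (x - 1) * Real.exp x) (x * Real.exp x) x := by
    intro x _
    have h1 : HasDerivAt (fun x : ℝ => (x - 1) * Real.exp x)
        (1 * Real.exp x + (x - 1) * Real.exp x) x :=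
      ((hasDerivAt_id x).sub_const 1).mul (Real.hasDerivAt_exp x)
    convert h1 using 1; ring
  have := intervalIntegral.integral_eq_sub_of_hasDerivAt h
    ((continuous_id.mul Real.continuous_exp).intervalIntegrable 0 ρ)
  rw [p, this]; norm_num

lemma p_mono : StrictMonoOn p (Set.Ici (0:ℝ)) := by
  have : StrictMonoOn (fun ρ : ℝ => (ρ - 1) * Real.exp ρ + 1) (Set.Ici 0) := by
    apply strictMonoOn_of_deriv_pos (convex_Ici 0)
    · fun_prop
    · intro x hx
      rw [interior_Ici] at hx
      have h1 : HasDerivAt (fun x : ℝ => (x - 1) * Real.exp x + 1) (x * Real.exp x) x := by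
        have h1 : HasDerivAt (fun x : ℝ => (x - 1) * Real.exp x)
            (1 * Real.exp x + (x - 1) * Real.exp x) x :=
          ((hasDerivAt_id x).sub_const 1).mul (Real.hasDerivAt_exp x)
        have := h1.add_const 1
        exact this.congr_deriv (by ring)
      rw [h1.deriv]
      exact mul_pos hx (Real.exp_pos x)
  intro a ha b hb hab
  rw [p_eq, p_eq]
  exact this ha hb hab

lemma p_zero : p 0 = 0 := by rw [p_eq]; simp

lemma p_pos {x : ℝ} (hx : 0 < x) : 0 < p x := by
  have := p_mono Set.self_mem_Ici (le_of_lt hx) hx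
  rwa [p_zero] at this

/-- helper: (x+c)/(x+d) → 1 at infinity -/
lemma aux_ratio (c d : ℝ) : Tendsto (fun x : ℝ => (x + c) / (x + d)) atTop (𝓝 1) := by
  have h1 : Tendsto (fun x : ℝ => 1 + (c - d) / (x + d)) atTop (𝓝 1) := by
    have : Tendsto (fun x : ℝ => (c - d) / (x + d)) atTop (𝓝 0) :=
      tendsto_const_nhds.div_atTop (tendsto_atTop_add_const_right _ d tendsto_id)
    simpa using tendsto_const_nhds.add this
  apply h1.congr'
  filter_upwards [eventually_gt_atTop (-d)] with x hx
  have hxd : x + d ≠ 0 := by linarith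
  field_simp
  ring

/-- The weight of the delta wave:
`[(u_r − u_l)/2 + ε(p(ρ*_ε) − p(ρ_r))/(u*_ε − u_r) − ε(p(ρ*_ε) − p(ρ_l))/(u*_ε − u_l)]·ρ*_ε`
converges to `(1/2)(u_l − u_r)(ρ_l + ρ_r)` as `ε → 0⁺`. -/
theorem stmt9 (ul ur ρl ρr η : ℝ) (hu : ur < ul) (hρl : 0 < ρl) (hρr : 0 < ρr)
    (hη : 0 < η) (us ρs : ℝ → ℝ)
    (hmem : ∀ ε ∈ Set.Ioo (0:ℝ) η, ur < us ε ∧ us ε < ul ∧ max ρl ρr < ρs ε)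
    (heq1 : ∀ ε ∈ Set.Ioo (0:ℝ) η,
      (us ε - ul) ^ 2 * (ρs ε + ρl) / 2 = ε * (ρs ε - ρl) * (p (ρs ε) - p ρl))
    (heq2 : ∀ ε ∈ Set.Ioo (0:ℝ) η,
      (us ε - ur) ^ 2 * (ρs ε + ρr) / 2 = ε * (ρs ε - ρr) * (p (ρs ε) - p ρr)) :
    Tendsto (fun ε =>
        ((ur - ul) / 2 + ε * (p (ρs ε) - p ρr) / (us ε - ur)
          - ε * (p (ρs ε) - p ρl) / (us ε - ul)) * ρs ε)
      (𝓝[>] (0:ℝ)) (𝓝 ((1 / 2) * (ul - ur) * (ρl + ρr))) := by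
  set l := 𝓝[>] (0:ℝ)
  have hIoo : Set.Ioo (0:ℝ) η ∈ l := Ioo_mem_nhdsGT hη
  set d := ul - ur with hd
  have hdpos : 0 < d := by simp [hd]; linarith
  -- basic facts on the interval
  have hfacts : ∀ ε ∈ Set.Ioo (0:ℝ) η,
      0 < ε ∧ ur < us ε ∧ us ε < ul ∧ ρl < ρs ε ∧ ρr < ρs ε ∧
      0 < p (ρs ε) - p ρl ∧ 0 < p (ρs ε) - p ρr := by
    intro ε hε
    obtain ⟨h1, h2, h3⟩ := hmem ε hε
    have hRl : ρl < ρs ε := lt_of_le_of_lt (le_max_left _ _) h3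
    have hRr : ρr < ρs ε := lt_of_le_of_lt (le_max_right _ _) h3
    refine ⟨hε.1, h1, h2, hRl, hRr, ?_, ?_⟩
    · have := p_mono (le_of_lt hρl) (le_of_lt (hρl.trans hRl)) hRl; linarith
    · have := p_mono (le_of_lt hρr) (le_of_lt (hρr.trans hRr)) hRr; linarith
  -- p (ρs ε) ≥ d^2/(8ε)
  have hplow : ∀ ε ∈ Set.Ioo (0:ℝ) η, d ^ 2 / (8 * ε) ≤ p (ρs ε) := by
    intro ε hε
    obtain ⟨hε0, h1, h2, hRl, hRr, hPl, hPr⟩ := hfacts ε hε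
    have e1 := heq1 ε hε
    have e2 := heq2 ε hε
    have hpRl : 0 < p ρl := p_pos hρl
    have hpRr : 0 < p ρr := p_pos hρr
    have ha2 : (us ε - ul) ^ 2 ≤ 2 * ε * p (ρs ε) := by
      have h := mul_le_mul_of_nonneg_left
        (mul_le_mul (by linarith : ρs ε - ρl ≤ ρs ε + ρl)
          (by linarith : p (ρs ε) - p ρl ≤ p (ρs ε)) (le_of_lt hPl)
          (by linarith)) (le_of_lt hε0)
      have hden : 0 < ρs ε + ρl := by linarith
      nlinarith [sq_nonneg (us ε - ul)]
    have hb2 : (us ε - ur) ^ 2 ≤ 2 * ε * p (ρs ε) := by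
      have h := mul_le_mul_of_nonneg_left
        (mul_le_mul (by linarith : ρs ε - ρr ≤ ρs ε + ρr)
          (by linarith : p (ρs ε) - p ρr ≤ p (ρs ε)) (le_of_lt hPr)
          (by linarith)) (le_of_lt hε0)
      have hden : 0 < ρs ε + ρr := by linarith
      nlinarith [sq_nonneg (us ε - ur)]
    rw [div_le_iff₀ (by linarith : (0:ℝ) < 8 * ε)]
    nlinarith [sq_nonneg (us ε - ul + (us ε - ur))]
  -- p ∘ ρs → ∞
  have hT1 : Tendsto (fun ε => p (ρs ε)) l atTop := by
    apply tendsto_atTop_mono' l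
      (by filter_upwards [hIoo] with ε hε using hplow ε hε)
    have : Tendsto (fun ε : ℝ => d ^ 2 / 8 * ε⁻¹) l atTop :=
      Tendsto.const_mul_atTop (by positivity) tendsto_inv_nhdsGT_zero
    apply this.congr; intro ε; ring
  -- ρs → ∞
  have hT2 : Tendsto ρs l atTop := by
    rw [tendsto_atTop]
    intro C
    filter_upwards [hIoo, hT1.eventually (eventually_gt_atTop (p (max C 0)))] with ε hε hp
    obtain ⟨hε0, h1, h2, hRl, hRr, hPl, hPr⟩ := hfacts ε hε
    by_contra hcon
    push_neg at hcon
    have hRnn : (0:ℝ) ≤ ρs ε := by linarith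
    have hle : ρs ε ≤ max C 0 := le_trans (le_of_lt hcon) (le_max_left C 0)
    have : p (ρs ε) ≤ p (max C 0) := by
      rcases lt_or_eq_of_le hle with h | h
      · exact le_of_lt (p_mono hRnn (le_max_right C 0) h)
      · rw [h]
    linarith
  -- the ratio r = (us-ul)/(us-ur) squared tends to 1
  set r := fun ε => (us ε - ul) / (us ε - ur) with hrdef
  have hr2 : Tendsto (fun ε => (r ε) ^ 2) l (𝓝 1) := by
    have h1 : Tendsto (fun ε => (ρs ε + (-ρl)) / (ρs ε + ρl)) l (𝓝 1) :=
      (aux_ratio (-ρl) ρl).comp hT2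
    have h2 : Tendsto (fun ε => (ρs ε + ρr) / (ρs ε + (-ρr))) l (𝓝 1) :=
      (aux_ratio ρr (-ρr)).comp hT2
    have h3 : Tendsto (fun ε => (p (ρs ε) + (-p ρl)) / (p (ρs ε) + (-p ρr))) l (𝓝 1) :=
      (aux_ratio (-p ρl) (-p ρr)).comp hT1
    have hprod := (h1.mul h2).mul h3
    norm_num at hprod
    apply hprod.congr'
    filter_upwards [hIoo] with ε hε
    obtain ⟨hε0, h1', h2', hRl, hRr, hPl, hPr⟩ := hfacts ε hε
    have e1 := heq1 ε hε
    have e2 := heq2 ε hε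
    have hbne : us ε - ur ≠ 0 := by linarith
    have hε0' : ε ≠ 0 := ne_of_gt hε0
    have hd1 : ρs ε + ρl ≠ 0 := by linarith
    have hd2 : ρs ε + ρr ≠ 0 := by linarith
    have hd3 : ρs ε - ρl ≠ 0 := by linarith
    have hd4 : ρs ε - ρr ≠ 0 := by linarith
    have hd5 : p (ρs ε) - p ρr ≠ 0 := by linarith
    have hb2ne : (us ε - ur) ^ 2 ≠ 0 := pow_ne_zero _ hbne
    have hdenne : (ρs ε + ρl) * (ρs ε + -ρr) * (p (ρs ε) + -p ρr) ≠ 0 := by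
      apply mul_ne_zero (mul_ne_zero hd1 _) _
      · intro h; apply hd4; linarith
      · intro h; apply hd5; linarith
    show _ = (r ε) ^ 2
    rw [hrdef, div_mul_div_comm, div_mul_div_comm, div_pow,
      div_eq_div_iff hdenne hb2ne]
    linear_combination (2 * (ρs ε - ρl) * (p (ρs ε) - p ρl)) * e2
      - (2 * (ρs ε - ρr) * (p (ρs ε) - p ρr)) * e1
  -- r tends to -1
  have hrt : Tendsto r l (𝓝 (-1)) := by
    have hs : Tendsto (fun ε => -Real.sqrt ((r ε) ^ 2)) l (𝓝 (-1)) := by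
      have := hr2.sqrt
      rw [Real.sqrt_one] at this
      simpa using this.neg
    apply hs.congr'
    filter_upwards [hIoo] with ε hε
    obtain ⟨hε0, h1', h2', hRl, hRr, hPl, hPr⟩ := hfacts ε hε
    have hrneg : r ε < 0 := div_neg_of_neg_of_pos (by linarith) (by linarith)
    rw [Real.sqrt_sq_eq_abs, abs_of_neg hrneg]; ring
  -- us tends to (ul+ur)/2
  have hus : Tendsto us l (𝓝 ((ul + ur) / 2)) := by
    rw [← tendsto_sub_nhds_zero_iff]
    have hg : Tendsto (fun ε => d / 2 * |1 + r ε|) l (𝓝 0) := by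
      have h0 : Tendsto (fun ε => 1 + r ε) l (𝓝 0) := by
        simpa using hrt.const_add 1
      have := (h0.abs).const_mul (d / 2)
      simpa using this
    have hbound : ∀ᶠ ε in l, |us ε - (ul + ur) / 2| ≤ d / 2 * |1 + r ε| := by
      filter_upwards [hIoo] with ε hε
      obtain ⟨hε0, h1', h2', hRl, hRr, hPl, hPr⟩ := hfacts ε hε
      have hbne : us ε - ur ≠ 0 := by linarith
      have hform : us ε - (ul + ur) / 2 = (us ε - ur) * (1 + r ε) / 2 := by
        rw [hrdef]; field_simp; ring
      rw [hform, abs_div, abs_mul, abs_of_pos (by linarith : (0:ℝ) < us ε - ur)]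
      rw [abs_of_pos (by norm_num : (0:ℝ) < 2)]
      rw [div_le_iff₀ (by norm_num : (0:ℝ) < 2)]
      have : us ε - ur ≤ d := by simp [hd]; linarith
      nlinarith [abs_nonneg (1 + r ε)]
    have hgneg : Tendsto (fun ε => -(d / 2 * |1 + r ε|)) l (𝓝 0) := by
      simpa using hg.neg
    apply tendsto_of_tendsto_of_tendsto_of_le_of_le' hgneg hg
    · filter_upwards [hbound] with ε h using neg_le_of_abs_le h
    · filter_upwards [hbound] with ε h using le_of_abs_le h
  -- final limit of the simplified expression
  have h1 : Tendsto (fun ε => ρs ε / (ρs ε - ρr)) l (𝓝 1) := by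
    refine ((aux_ratio 0 (-ρr)).comp hT2).congr fun ε => ?_
    show (ρs ε + 0) / (ρs ε + -ρr) = ρs ε / (ρs ε - ρr)
    rw [add_zero, ← sub_eq_add_neg]
  have h2 : Tendsto (fun ε => ρs ε / (ρs ε - ρl)) l (𝓝 1) := by
    refine ((aux_ratio 0 (-ρl)).comp hT2).congr fun ε => ?_
    show (ρs ε + 0) / (ρs ε + -ρl) = ρs ε / (ρs ε - ρl)
    rw [add_zero, ← sub_eq_add_neg]
  have hA : Tendsto (fun ε => us ε - ur) l (𝓝 (d / 2)) := by
    have := hus.sub_const ur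
    convert this using 2
    rw [hd]; ring
  have hB : Tendsto (fun ε => ul - us ε) l (𝓝 (d / 2)) := by
    have := hus.const_sub ul
    convert this using 2
    rw [hd]; ring
  have hfin := ((hA.mul (tendsto_const_nhds (x := ρr))).mul h1).add
    ((hB.mul (tendsto_const_nhds (x := ρl))).mul h2)
  have hval : d / 2 * ρr * 1 + d / 2 * ρl * 1 = (1 / 2) * (ul - ur) * (ρl + ρr) := by
    rw [hd]; ring
  rw [hval] at hfin
  apply hfin.congr'
  filter_upwards [hIoo] with ε hε
  obtain ⟨hε0, h1', h2', hRl, hRr, hPl, hPr⟩ := hfacts ε hε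
  have e1 := heq1 ε hε
  have e2 := heq2 ε hε
  have hane : us ε - ul ≠ 0 := sub_ne_zero.mpr (ne_of_lt h2')
  have hbne : us ε - ur ≠ 0 := sub_ne_zero.mpr (ne_of_gt h1')
  have hd3 : ρs ε - ρl ≠ 0 := by linarith
  have hd4 : ρs ε - ρr ≠ 0 := by linarith
  have hel : ε * (p (ρs ε) - p ρl) =
      (us ε - ul) ^ 2 * (ρs ε + ρl) / (2 * (ρs ε - ρl)) := by
    rw [eq_div_iff (by intro h; apply hd3; linarith : (2 : ℝ) * (ρs ε - ρl) ≠ 0)]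
    linarith
  have her : ε * (p (ρs ε) - p ρr) =
      (us ε - ur) ^ 2 * (ρs ε + ρr) / (2 * (ρs ε - ρr)) := by
    rw [eq_div_iff (by intro h; apply hd4; linarith : (2 : ℝ) * (ρs ε - ρr) ≠ 0)]
    linarith
  show _ = (_ + ε * (p (ρs ε) - p ρr) / (us ε - ur) - ε * (p (ρs ε) - p ρl) / (us ε - ul)) * ρs ε
  rw [hel, her]
  field_simp
  ring
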